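/- The function ψ: (0,1) → (0,∞) defined by ψ(k) = 2(E(k) - (1-k)K(k)) / (E'(k) - k K'(k)) is a strictly increasing homeomorphism from (0,1) onto (0,∞); in particular ψ⁻¹: (0,∞) → (0,1) is well-defined and continuous. -/

import Mathlib

set_option maxHeartbeats 1000000


open Real

/-- Complete elliptic integral of the first kind. -/
noncomputable def ellK (r : ℝ) : ℝ :=
  ∫ θ in (0:ℝ)..(π/2), 1 / Real.sqrt (1 - r ^ 2 * Real.sin θ ^ 2)

/-- Complete elliptic integral of the second kind. -/
noncomputable def ellE (r : ℝ) : ℝ :=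
  ∫ θ in (0:ℝ)..(π/2), Real.sqrt (1 - r ^ 2 * Real.sin θ ^ 2)

/-- Complementary elliptic integral K'(k) = K(√(1-k²)). -/
noncomputable def ellK' (k : ℝ) : ℝ := ellK (Real.sqrt (1 - k ^ 2))

/-- Complementary elliptic integral E'(k) = E(√(1-k²)). -/
noncomputable def ellE' (k : ℝ) : ℝ := ellE (Real.sqrt (1 - k ^ 2))

/-- The Duren–Pfaltzgraff function ψ. -/
noncomputable def psi (k : ℝ) : ℝ :=
  2 * (ellE k - (1 - k) * ellK k) / (ellE' k - k * ellK' k)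

namespace PsiAux

lemma Xpos {x : ℝ} (hx : x^2 < 1) (θ : ℝ) : 0 < 1 - x^2 * Real.sin θ^2 := by
  nlinarith [Real.sin_sq_le_one θ, sq_nonneg x, sq_nonneg (Real.sin θ)]

lemma Ybound {x : ℝ} (hx : 0 < x) (θ : ℝ) : min 1 (x^2) ≤ 1 - (1 - x^2) * Real.sin θ^2 := by
  rcases le_total (1 - x^2) 0 with h | h
  · have : (1 - x^2) * Real.sin θ^2 ≤ 0 := mul_nonpos_of_nonpos_of_nonneg h (sq_nonneg _)
    calc min 1 (x^2) ≤ 1 := min_le_left _ _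
      _ ≤ _ := by linarith
  · have h2 : (1 - x^2) * Real.sin θ^2 ≤ 1 - x^2 :=
      mul_le_of_le_one_right h (Real.sin_sq_le_one θ)
    calc min 1 (x^2) ≤ x^2 := min_le_right _ _
      _ ≤ _ := by linarith

lemma Ypos {x : ℝ} (hx : 0 < x) (θ : ℝ) : 0 < 1 - (1 - x^2) * Real.sin θ^2 :=
  lt_of_lt_of_le (lt_min one_pos (pow_pos hx 2)) (Ybound hx θ)

lemma contS (m : ℝ) : Continuous fun θ => Real.sqrt (1 - m * Real.sin θ^2) :=
  Real.continuous_sqrt.comp (by continuity)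

lemma contF {m c : ℝ} (hm : ∀ θ : ℝ, 0 < 1 - m * Real.sin θ^2) :
    Continuous fun θ => Real.sqrt (1 - m * Real.sin θ^2) - c / Real.sqrt (1 - m * Real.sin θ^2) :=
  (contS m).sub <| (continuous_const).div (contS m) fun θ => (Real.sqrt_pos.mpr (hm θ)).ne'

lemma contD1 {m q : ℝ} (hm : ∀ θ : ℝ, 0 < 1 - m * Real.sin θ^2) :
    Continuous fun θ : ℝ =>
      (1 - 2*Real.sin θ^2 + q*Real.sin θ^2^2) / Real.sqrt (1 - m * Real.sin θ^2)^3 :=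
  Continuous.div (by continuity) ((contS m).pow 3)
    fun θ => pow_ne_zero 3 (Real.sqrt_pos.mpr (hm θ)).ne'

/-! ### Pointwise derivatives in the parameter `x` -/

lemma hasDerivAt_Fn (θ : ℝ) {x : ℝ} (hx : x^2 < 1) :
    HasDerivAt (fun y : ℝ => Real.sqrt (1 - y^2 * Real.sin θ^2) - (1-y) / Real.sqrt (1 - y^2 * Real.sin θ^2))
      ((1 - 2*x*Real.sin θ^2 + x^3*Real.sin θ^2^2) / Real.sqrt (1 - x^2 * Real.sin θ^2)^3) x := by
  have hX := Xpos hx θ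
  have hS := Real.sqrt_pos.mpr hX
  have h1 : HasDerivAt (fun y : ℝ => 1 - y^2 * Real.sin θ^2) (-(2*x*Real.sin θ^2)) x := by
    simpa using ((hasDerivAt_pow 2 x).mul_const (Real.sin θ^2)).const_sub 1
  have h2 := h1.sqrt hX.ne'
  have h3 : HasDerivAt (fun y : ℝ => 1 - y) (-1) x := by
    simpa using (hasDerivAt_id x).const_sub 1
  have h4 := h3.div h2 hS.ne'
  have h5 := h2.sub h4
  refine h5.congr_deriv ?_
  symm
  have hsq : Real.sqrt (1 - x^2 * Real.sin θ^2)^2 = 1 - x^2 * Real.sin θ^2 := Real.sq_sqrt hX.le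
  set S := Real.sqrt (1 - x^2 * Real.sin θ^2) with hSdef
  have hnum : 1 - 2*x*Real.sin θ^2 + x^3*Real.sin θ^2^2
      = (1 - x*Real.sin θ^2)*S^2 - (1-x)*(x*Real.sin θ^2) := by rw [hsq]; ring
  rw [hnum]
  field_simp
  ring

lemma hasDerivAt_Fd (θ : ℝ) {x : ℝ} (hx : 0 < x) :
    HasDerivAt (fun y : ℝ => Real.sqrt (1 - (1-y^2) * Real.sin θ^2) - y / Real.sqrt (1 - (1-y^2) * Real.sin θ^2))
      ((-1 + (1+x)*Real.sin θ^2 - x*(1-x^2)*Real.sin θ^2^2) / Real.sqrt (1 - (1-x^2) * Real.sin θ^2)^3) x := by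
  have hY := Ypos hx θ
  have hS := Real.sqrt_pos.mpr hY
  have h1 : HasDerivAt (fun y : ℝ => 1 - (1-y^2) * Real.sin θ^2) (2*x*Real.sin θ^2) x := by
    have := (((hasDerivAt_pow 2 x).const_sub 1).mul_const (Real.sin θ^2)).const_sub 1
    simpa using this.congr_deriv (by ring)
  have h2 := h1.sqrt hY.ne'
  have h4 := (hasDerivAt_id x).div h2 hS.ne'
  have h5 := h2.sub h4
  refine h5.congr_deriv ?_
  symm
  simp only [id]
  have hsq : Real.sqrt (1 - (1-x^2) * Real.sin θ^2)^2 = 1 - (1-x^2) * Real.sin θ^2 :=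
    Real.sq_sqrt hY.le
  set S := Real.sqrt (1 - (1-x^2) * Real.sin θ^2) with hSdef
  have hnum : -1 + (1+x)*Real.sin θ^2 - x*(1-x^2)*Real.sin θ^2^2
      = (x*Real.sin θ^2 - 1)*S^2 + x^2*Real.sin θ^2 := by rw [hsq]; ring
  rw [hnum]
  field_simp
  ring

/-! ### The antiderivative trick in `θ` -/

lemma hasDerivAt_A {m : ℝ} (θ : ℝ) (hm : 0 < 1 - m * Real.sin θ^2) :
    HasDerivAt (fun t => Real.sin t * Real.cos t / Real.sqrt (1 - m * Real.sin t^2))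
      ((1 - 2*Real.sin θ^2 + m*Real.sin θ^2^2) / Real.sqrt (1 - m * Real.sin θ^2)^3) θ := by
  have hS := Real.sqrt_pos.mpr hm
  have hsc : HasDerivAt (fun t => Real.sin t * Real.cos t)
      (Real.cos θ * Real.cos θ + Real.sin θ * (-Real.sin θ)) θ :=
    (Real.hasDerivAt_sin θ).mul (Real.hasDerivAt_cos θ)
  have h1 : HasDerivAt (fun t => 1 - m * Real.sin t^2) (-(m * (2 * Real.sin θ * Real.cos θ))) θ := by
    have h0 : HasDerivAt (fun t => Real.sin t^2) (2 * Real.sin θ * Real.cos θ) θ := by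
      simpa [mul_comm, mul_assoc] using (Real.hasDerivAt_sin θ).fun_pow 2
    simpa using (h0.const_mul m).const_sub 1
  have h2 := h1.sqrt hm.ne'
  have h5 := hsc.div h2 hS.ne'
  refine h5.congr_deriv ?_
  symm
  have hsq : Real.sqrt (1 - m * Real.sin θ^2)^2 = 1 - m * Real.sin θ^2 := Real.sq_sqrt hm.le
  have hcos : Real.cos θ^2 = 1 - Real.sin θ^2 := Real.cos_sq' θ
  set S := Real.sqrt (1 - m * Real.sin θ^2) with hSdef
  have hnum : 1 - 2*Real.sin θ^2 + m*Real.sin θ^2^2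
      = (1 - 2*Real.sin θ^2)*S^2 + m*Real.sin θ^2*(1 - Real.sin θ^2) := by rw [hsq]; ring
  rw [hnum]
  field_simp
  linear_combination (-(m*Real.sin θ^2) - S^2) * hcos

lemma integral_A_eq_zero {m : ℝ} (hm : ∀ θ : ℝ, 0 < 1 - m * Real.sin θ^2) :
    ∫ θ in (0:ℝ)..(π/2),
      (1 - 2*Real.sin θ^2 + m*Real.sin θ^2^2) / Real.sqrt (1 - m * Real.sin θ^2)^3 = 0 := by
  rw [intervalIntegral.integral_eq_sub_of_hasDerivAt
    (fun θ _ => hasDerivAt_A θ (hm θ)) ((contD1 hm).intervalIntegrable _ _)]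
  simp

/-! ### Splitting identities -/

lemma Fn_split {k : ℝ} (hk : k^2 < 1) (hk1 : (0:ℝ) < 1 + k) (θ : ℝ) :
    (1 - 2*k*Real.sin θ^2 + k^3*Real.sin θ^2^2) / Real.sqrt (1 - k^2 * Real.sin θ^2)^3
      = k/(1+k) * ((1 - 2*Real.sin θ^2 + k^2*Real.sin θ^2^2) / Real.sqrt (1 - k^2 * Real.sin θ^2)^3)
        + 1/(1+k) * Real.sqrt (1 - k^2 * Real.sin θ^2) := by
  have hX := Xpos hk θ
  have hS := Real.sqrt_pos.mpr hX
  have hsq : Real.sqrt (1 - k^2 * Real.sin θ^2)^2 = 1 - k^2 * Real.sin θ^2 := Real.sq_sqrt hX.le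
  set S := Real.sqrt (1 - k^2 * Real.sin θ^2) with hSdef
  have hnum : 1 - 2*k*Real.sin θ^2 + k^3*Real.sin θ^2^2
      = (k*(1 - 2*Real.sin θ^2 + k^2*Real.sin θ^2^2) + (S^2)^2)/(1+k) := by
    rw [hsq]; field_simp; ring
  rw [hnum]
  field_simp

lemma Fd_split {k : ℝ} (hk1 : (0:ℝ) < 1 + k) (θ : ℝ)
    (hY : 0 < 1 - (1-k^2) * Real.sin θ^2) :
    (-1 + (1+k)*Real.sin θ^2 - k*(1-k^2)*Real.sin θ^2^2) / Real.sqrt (1 - (1-k^2) * Real.sin θ^2)^3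
      = -((1 - 2*Real.sin θ^2 + (1-k^2)*Real.sin θ^2^2) / Real.sqrt (1 - (1-k^2) * Real.sin θ^2)^3)
        + 1/(1+k) * (Real.sqrt (1 - (1-k^2) * Real.sin θ^2)
            - 1 / Real.sqrt (1 - (1-k^2) * Real.sin θ^2)) := by
  have hS := Real.sqrt_pos.mpr hY
  have hsq : Real.sqrt (1 - (1-k^2) * Real.sin θ^2)^2 = 1 - (1-k^2) * Real.sin θ^2 :=
    Real.sq_sqrt hY.le
  set S := Real.sqrt (1 - (1-k^2) * Real.sin θ^2) with hSdef
  have hnum : -1 + (1+k)*Real.sin θ^2 - k*(1-k^2)*Real.sin θ^2^2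
      = (-((1+k)*(1 - 2*Real.sin θ^2 + (1-k^2)*Real.sin θ^2^2)) + ((S^2)^2 - S^2))/(1+k) := by
    rw [hsq]; field_simp; ring
  rw [hnum]
  field_simp

/-! ### The integrals of the parameter-derivatives -/

lemma integral_Fn {k : ℝ} (hk0 : 0 ≤ k) (hk : k^2 < 1) :
    ∫ θ in (0:ℝ)..(π/2),
        (1 - 2*k*Real.sin θ^2 + k^3*Real.sin θ^2^2) / Real.sqrt (1 - k^2 * Real.sin θ^2)^3
      = (∫ θ in (0:ℝ)..(π/2), Real.sqrt (1 - k^2 * Real.sin θ^2)) / (1+k) := by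
  have hk1 : (0:ℝ) < 1 + k := by linarith
  have hX := Xpos hk
  rw [intervalIntegral.integral_congr (g := fun θ =>
    k/(1+k) * ((1 - 2*Real.sin θ^2 + k^2*Real.sin θ^2^2) / Real.sqrt (1 - k^2 * Real.sin θ^2)^3)
      + 1/(1+k) * Real.sqrt (1 - k^2 * Real.sin θ^2)) (fun θ _ => Fn_split hk hk1 θ)]
  rw [intervalIntegral.integral_add
      ((continuous_const.fun_mul (contD1 hX)).intervalIntegrable _ _)
      ((continuous_const.fun_mul (contS (k^2))).intervalIntegrable _ _),
    intervalIntegral.integral_const_mul, intervalIntegral.integral_const_mul,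
    integral_A_eq_zero hX]
  ring

lemma integral_Fd {k : ℝ} (hk0 : 0 < k) :
    ∫ θ in (0:ℝ)..(π/2),
        (-1 + (1+k)*Real.sin θ^2 - k*(1-k^2)*Real.sin θ^2^2) / Real.sqrt (1 - (1-k^2) * Real.sin θ^2)^3
      = (∫ θ in (0:ℝ)..(π/2),
          (Real.sqrt (1 - (1-k^2) * Real.sin θ^2) - 1 / Real.sqrt (1 - (1-k^2) * Real.sin θ^2))) / (1+k) := by
  have hk1 : (0:ℝ) < 1 + k := by linarith
  have hY := Ypos hk0
  rw [intervalIntegral.integral_congr (g := fun θ =>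
    -((1 - 2*Real.sin θ^2 + (1-k^2)*Real.sin θ^2^2) / Real.sqrt (1 - (1-k^2) * Real.sin θ^2)^3)
      + 1/(1+k) * (Real.sqrt (1 - (1-k^2) * Real.sin θ^2)
          - 1 / Real.sqrt (1 - (1-k^2) * Real.sin θ^2)))
    (fun θ _ => Fd_split hk1 θ (hY θ))]
  rw [intervalIntegral.integral_add
      (((contD1 hY).fun_neg).intervalIntegrable _ _)
      ((continuous_const.fun_mul (contF hY)).intervalIntegrable _ _),
    intervalIntegral.integral_neg, intervalIntegral.integral_const_mul,
    integral_A_eq_zero hY]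
  ring

/-! ### The two parametric integrals and their derivatives -/

noncomputable def nfun (k : ℝ) : ℝ :=
  ∫ θ in (0:ℝ)..(π/2),
    (Real.sqrt (1 - k^2 * Real.sin θ^2) - (1-k) / Real.sqrt (1 - k^2 * Real.sin θ^2))

noncomputable def dfun (k : ℝ) : ℝ :=
  ∫ θ in (0:ℝ)..(π/2),
    (Real.sqrt (1 - (1-k^2) * Real.sin θ^2) - k / Real.sqrt (1 - (1-k^2) * Real.sin θ^2))

lemma hasDerivAt_nfun {k : ℝ} (hk0 : 0 ≤ k) (hk1 : k < 1) :
    HasDerivAt nfun ((∫ θ in (0:ℝ)..(π/2), Real.sqrt (1 - k^2 * Real.sin θ^2)) / (1+k)) k := by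
  have hr1 : (1+k)/2 < 1 := by linarith
  have hr0 : (0:ℝ) < (1+k)/2 := by linarith
  have hε : (0:ℝ) < (1-k)/2 := by linarith
  set r : ℝ := (1+k)/2 with hrdef
  have hball : ∀ x ∈ Metric.ball k ((1-k)/2), x^2 < r^2 := by
    intro x hx
    rw [Metric.mem_ball, Real.dist_eq] at hx
    have h1 : |x| < r := by
      calc |x| ≤ |x - k| + |k| := by simpa using abs_add_le (x-k) k
        _ < (1-k)/2 + k := by rw [abs_of_nonneg hk0]; linarith
        _ = r := by rw [hrdef]; ring
    calc x^2 = |x|^2 := (sq_abs x).symm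
      _ < r^2 := by nlinarith [abs_nonneg x]
  have hx1 : ∀ x ∈ Metric.ball k ((1-k)/2), x^2 < 1 := fun x hx =>
    lt_trans (hball x hx) (by nlinarith)
  have hSr : (0:ℝ) < Real.sqrt (1 - r^2) := Real.sqrt_pos.mpr (by nlinarith)
  have key := intervalIntegral.hasDerivAt_integral_of_dominated_loc_of_deriv_le
      (F := fun (y : ℝ) (θ : ℝ) =>
        Real.sqrt (1 - y^2 * Real.sin θ^2) - (1-y) / Real.sqrt (1 - y^2 * Real.sin θ^2))
      (F' := fun (y : ℝ) (θ : ℝ) =>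
        (1 - 2*y*Real.sin θ^2 + y^3*Real.sin θ^2^2) / Real.sqrt (1 - y^2 * Real.sin θ^2)^3)
      (x₀ := k) (a := 0) (b := π/2) (μ := MeasureTheory.volume)
      (bound := fun _ => 4 / (Real.sqrt (1 - r^2))^3) (Metric.ball_mem_nhds k hε)
      ?_ ?_ ?_ ?_ ?_ ?_
  · rw [integral_Fn hk0 (by nlinarith)] at key
    exact key.2
  · filter_upwards [Metric.ball_mem_nhds k hε] with x hx
    exact (contF (Xpos (hx1 x hx))).aestronglyMeasurable
  · exact (contF (Xpos (by nlinarith : k^2 < 1))).intervalIntegrable _ _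
  · apply Continuous.aestronglyMeasurable
    apply Continuous.div (by continuity) ((contS (k^2)).pow 3)
    exact fun θ => pow_ne_zero 3 (Real.sqrt_pos.mpr (Xpos (by nlinarith : k^2 < 1) θ)).ne'
  · filter_upwards with θ _ x hx
    have hx2 := hball x hx
    have hxs1 : x^2 < 1 := hx1 x hx
    have hxm : -1 < x := by nlinarith
    have hxM : x < 1 := by nlinarith
    have hu0 : (0:ℝ) ≤ Real.sin θ^2 := sq_nonneg _
    have hu1 : Real.sin θ^2 ≤ 1 := Real.sin_sq_le_one θ
    have hX : 0 < 1 - x^2*Real.sin θ^2 := Xpos hxs1 θ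
    have hXg : 1 - r^2 ≤ 1 - x^2*Real.sin θ^2 := by nlinarith
    have hSx : Real.sqrt (1 - r^2) ≤ Real.sqrt (1 - x^2*Real.sin θ^2) := Real.sqrt_le_sqrt hXg
    have hSpos : 0 < Real.sqrt (1 - x^2*Real.sin θ^2) := Real.sqrt_pos.mpr hX
    have hax : |x| ≤ 1 := by rw [abs_le]; constructor <;> linarith
    have c1 : |2*x*Real.sin θ^2| ≤ 2 := by
      rw [abs_mul, abs_mul, abs_two]
      nlinarith [abs_nonneg x, abs_nonneg (Real.sin θ^2), abs_le.mpr ⟨by linarith, hu1⟩]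
    have c2 : |x^3*Real.sin θ^2^2| ≤ 1 := by
      rw [abs_mul, abs_pow, abs_pow]
      exact mul_le_one₀ (pow_le_one₀ (abs_nonneg x) hax) (by positivity)
        (pow_le_one₀ (abs_nonneg _) (Real.abs_sin_le_one θ))
    obtain ⟨c1a, c1b⟩ := abs_le.mp c1
    obtain ⟨c2a, c2b⟩ := abs_le.mp c2
    have hnum : |1 - 2*x*Real.sin θ^2 + x^3*Real.sin θ^2^2| ≤ 4 := by
      rw [abs_le]; constructor <;> linarith
    rw [Real.norm_eq_abs, abs_div, abs_of_pos (pow_pos hSpos 3)]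
    exact div_le_div₀ (by positivity) hnum (by positivity) (pow_le_pow_left₀ hSr.le hSx 3)
  · exact intervalIntegrable_const
  · filter_upwards with θ _ x hx
    exact hasDerivAt_Fn θ (hx1 x hx)

lemma hasDerivAt_dfun {k : ℝ} (hk0 : 0 < k) (hk1 : k ≤ 1) :
    HasDerivAt dfun
      ((∫ θ in (0:ℝ)..(π/2),
        (Real.sqrt (1 - (1-k^2) * Real.sin θ^2) - 1 / Real.sqrt (1 - (1-k^2) * Real.sin θ^2))) / (1+k)) k := by
  have hε : (0:ℝ) < k/2 := by linarith
  set δ : ℝ := min 1 ((k/2)^2) with hδdef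
  have hδ0 : 0 < δ := lt_min one_pos (by positivity)
  have hball : ∀ x ∈ Metric.ball k (k/2), k/2 < x ∧ x < 2 := by
    intro x hx
    rw [Metric.mem_ball, Real.dist_eq, abs_lt] at hx
    constructor <;> [linarith; linarith]
  have hYδ : ∀ x ∈ Metric.ball k (k/2), ∀ θ : ℝ, δ ≤ 1 - (1-x^2) * Real.sin θ^2 := by
    intro x hx θ
    obtain ⟨hxa, hxb⟩ := hball x hx
    have h0x : 0 < x := lt_trans hε hxa
    refine le_trans ?_ (Ybound h0x θ)
    exact min_le_min le_rfl (by nlinarith)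
  have hSδ : (0:ℝ) < Real.sqrt δ := Real.sqrt_pos.mpr hδ0
  have key := intervalIntegral.hasDerivAt_integral_of_dominated_loc_of_deriv_le
      (F := fun (y : ℝ) (θ : ℝ) =>
        Real.sqrt (1 - (1-y^2) * Real.sin θ^2) - y / Real.sqrt (1 - (1-y^2) * Real.sin θ^2))
      (F' := fun (y : ℝ) (θ : ℝ) =>
        (-1 + (1+y)*Real.sin θ^2 - y*(1-y^2)*Real.sin θ^2^2) / Real.sqrt (1 - (1-y^2) * Real.sin θ^2)^3)
      (x₀ := k) (a := 0) (b := π/2) (μ := MeasureTheory.volume)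
      (bound := fun _ => 14 / (Real.sqrt δ)^3) (Metric.ball_mem_nhds k hε)
      ?_ ?_ ?_ ?_ ?_ ?_
  · rw [integral_Fd hk0] at key
    exact key.2
  · filter_upwards [Metric.ball_mem_nhds k hε] with x hx
    have h0x : 0 < x := lt_trans hε (hball x hx).1
    exact (contF (Ypos h0x)).aestronglyMeasurable
  · exact (contF (Ypos hk0)).intervalIntegrable _ _
  · apply Continuous.aestronglyMeasurable
    apply Continuous.div (by continuity) ((contS (1-k^2)).pow 3)
    exact fun θ => pow_ne_zero 3 (Real.sqrt_pos.mpr (Ypos hk0 θ)).ne'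
  · filter_upwards with θ _ x hx
    obtain ⟨hxa, hxb⟩ := hball x hx
    have h0x : 0 < x := lt_trans hε hxa
    have hu0 : (0:ℝ) ≤ Real.sin θ^2 := sq_nonneg _
    have hu1 : Real.sin θ^2 ≤ 1 := Real.sin_sq_le_one θ
    have hY : 0 < 1 - (1-x^2)*Real.sin θ^2 := Ypos h0x θ
    have hYg : δ ≤ 1 - (1-x^2)*Real.sin θ^2 := hYδ x hx θ
    have hSx : Real.sqrt δ ≤ Real.sqrt (1 - (1-x^2)*Real.sin θ^2) := Real.sqrt_le_sqrt hYg
    have hSpos : 0 < Real.sqrt (1 - (1-x^2)*Real.sin θ^2) := Real.sqrt_pos.mpr hY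
    have hpow : Real.sin θ^2^2 = (Real.sin θ^2)^2 := by ring
    have hu40 : (0:ℝ) ≤ Real.sin θ^2^2 := by rw [hpow]; positivity
    have hu4 : Real.sin θ^2^2 ≤ 1 := by
      rw [hpow]
      nlinarith [mul_nonneg (by linarith : (0:ℝ) ≤ 1 - Real.sin θ^2)
        (by linarith : (0:ℝ) ≤ 1 + Real.sin θ^2)]
    have hnum : |(-1 + (1+x)*Real.sin θ^2 - x*(1-x^2)*Real.sin θ^2^2)| ≤ 14 := by
      have e1 : |x*(1-x^2)| ≤ 10 := by
        rw [abs_mul]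
        have : |x| ≤ 2 := by rw [abs_le]; constructor <;> linarith
        have : |1 - x^2| ≤ 5 := by rw [abs_le]; constructor <;> nlinarith
        nlinarith [abs_nonneg x, abs_nonneg (1-x^2)]
      have e2 : -10 ≤ x*(1-x^2) := by nlinarith [abs_le.mp e1]
      have e3 : x*(1-x^2) ≤ 10 := by nlinarith [abs_le.mp e1]
      have p1 : x*(1-x^2)*Real.sin θ^2^2 ≤ 10 := by rw [hpow]; nlinarith [hu40, hu4, hpow]
      have p2 : -10 ≤ x*(1-x^2)*Real.sin θ^2^2 := by rw [hpow]; nlinarith [hu40, hu4, hpow]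
      have q0 : 0 ≤ (1+x)*Real.sin θ^2 := mul_nonneg (by linarith) hu0
      have q1 : (1+x)*Real.sin θ^2 ≤ 3 := by nlinarith
      rw [abs_le]
      constructor <;> linarith
    rw [Real.norm_eq_abs, abs_div, abs_of_pos (pow_pos hSpos 3)]
    exact div_le_div₀ (by norm_num) hnum (by positivity) (pow_le_pow_left₀ hSδ.le hSx 3)
  · exact intervalIntegrable_const
  · filter_upwards with θ _ x hx
    exact hasDerivAt_Fd θ (lt_trans hε (hball x hx).1)

/-! ### Monotonicity and positivity -/

lemma intE_pos {m : ℝ} (hm : ∀ θ : ℝ, 0 < 1 - m * Real.sin θ^2) :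
    0 < ∫ θ in (0:ℝ)..(π/2), Real.sqrt (1 - m * Real.sin θ^2) := by
  apply intervalIntegral.intervalIntegral_pos_of_pos_on ((contS m).intervalIntegrable _ _)
  · exact fun θ _ => Real.sqrt_pos.mpr (hm θ)
  · positivity

lemma intD_neg {k : ℝ} (hk0 : 0 < k) (hk1 : k < 1) :
    (∫ θ in (0:ℝ)..(π/2),
      (Real.sqrt (1 - (1-k^2) * Real.sin θ^2) - 1 / Real.sqrt (1 - (1-k^2) * Real.sin θ^2))) / (1+k) < 0 := by
  have hY := Ypos hk0
  have hpos : 0 < ∫ θ in (0:ℝ)..(π/2),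
      (1 / Real.sqrt (1 - (1-k^2) * Real.sin θ^2) - Real.sqrt (1 - (1-k^2) * Real.sin θ^2)) := by
    apply intervalIntegral.intervalIntegral_pos_of_pos_on
    · exact (((continuous_const.div (contS _)) fun θ =>
        (Real.sqrt_pos.mpr (hY θ)).ne').sub (contS _)).intervalIntegrable _ _
    · intro θ hθ
      have hs : 0 < Real.sin θ := Real.sin_pos_of_pos_of_lt_pi hθ.1
        (lt_trans hθ.2 (by linarith [Real.pi_pos]))
      have hY1 : 1 - (1-k^2) * Real.sin θ^2 < 1 := by
        nlinarith [mul_pos (show (0:ℝ) < 1-k^2 by nlinarith) (mul_pos hs hs)]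
      have hSpos := Real.sqrt_pos.mpr (hY θ)
      have hsq := Real.sq_sqrt (hY θ).le
      have heq : 1 / Real.sqrt (1 - (1-k^2) * Real.sin θ^2)
            - Real.sqrt (1 - (1-k^2) * Real.sin θ^2)
          = (1 - (1 - (1-k^2) * Real.sin θ^2)) / Real.sqrt (1 - (1-k^2) * Real.sin θ^2) := by
        field_simp
        linear_combination -hsq
      rw [heq]
      apply div_pos (by linarith) hSpos
    · positivity
  have heq2 : (fun θ => Real.sqrt (1 - (1-k^2) * Real.sin θ^2)
        - 1 / Real.sqrt (1 - (1-k^2) * Real.sin θ^2))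
      = fun θ => -(1 / Real.sqrt (1 - (1-k^2) * Real.sin θ^2)
        - Real.sqrt (1 - (1-k^2) * Real.sin θ^2)) := by
    funext θ; ring
  rw [heq2, intervalIntegral.integral_neg]
  apply div_neg_of_neg_of_pos (by linarith) (by linarith)

lemma nfun_mono : StrictMonoOn nfun (Set.Ico 0 1) := by
  apply strictMonoOn_of_deriv_pos (convex_Ico 0 1)
  · exact fun x hx => (hasDerivAt_nfun hx.1 hx.2).continuousAt.continuousWithinAt
  · intro x hx
    rw [interior_Ico] at hx
    rw [(hasDerivAt_nfun hx.1.le hx.2).deriv]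
    exact div_pos (intE_pos (Xpos (by nlinarith [hx.1, hx.2]))) (by linarith [hx.1])

lemma dfun_anti : StrictAntiOn dfun (Set.Ioc 0 1) := by
  apply strictAntiOn_of_deriv_neg (convex_Ioc 0 1)
  · exact fun x hx => (hasDerivAt_dfun hx.1 hx.2).continuousAt.continuousWithinAt
  · intro x hx
    rw [interior_Ioc] at hx
    rw [(hasDerivAt_dfun hx.1 hx.2.le).deriv]
    exact intD_neg hx.1 hx.2

lemma nfun_zero : nfun 0 = 0 := by
  have : ∀ θ : ℝ, Real.sqrt (1 - (0:ℝ)^2 * Real.sin θ^2)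
      - (1-(0:ℝ)) / Real.sqrt (1 - (0:ℝ)^2 * Real.sin θ^2) = 0 := by
    intro θ; norm_num
  unfold nfun
  rw [intervalIntegral.integral_congr (g := fun _ => (0:ℝ)) fun θ _ => this θ]
  simp

lemma dfun_one : dfun 1 = 0 := by
  have : ∀ θ : ℝ, Real.sqrt (1 - (1-(1:ℝ)^2) * Real.sin θ^2)
      - (1:ℝ) / Real.sqrt (1 - (1-(1:ℝ)^2) * Real.sin θ^2) = 0 := by
    intro θ; norm_num
  unfold dfun
  rw [intervalIntegral.integral_congr (g := fun _ => (0:ℝ)) fun θ _ => this θ]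
  simp

lemma nfun_pos {k : ℝ} (hk : k ∈ Set.Ioo (0:ℝ) 1) : 0 < nfun k := by
  have := nfun_mono (Set.mem_Ico.mpr ⟨le_rfl, one_pos⟩) (Set.mem_Ico.mpr ⟨hk.1.le, hk.2⟩) hk.1
  rwa [nfun_zero] at this

lemma dfun_pos {k : ℝ} (hk : k ∈ Set.Ioo (0:ℝ) 1) : 0 < dfun k := by
  have := dfun_anti (Set.mem_Ioc.mpr ⟨hk.1, hk.2.le⟩) (Set.mem_Ioc.mpr ⟨one_pos, le_rfl⟩) hk.2
  rwa [dfun_one] at this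

/-! ### Relating `psi` to `nfun`/`dfun` -/

lemma nfun_eq {k : ℝ} (hk : k^2 < 1) : ellE k - (1-k) * ellK k = nfun k := by
  have hX := Xpos hk
  have h1 : IntervalIntegrable (fun θ : ℝ => Real.sqrt (1 - k^2 * Real.sin θ^2))
      MeasureTheory.volume 0 (π/2) := (contS (k^2)).intervalIntegrable _ _
  have h2 : IntervalIntegrable (fun θ : ℝ => (1-k) * (1 / Real.sqrt (1 - k^2 * Real.sin θ^2)))
      MeasureTheory.volume 0 (π/2) := by
    apply Continuous.intervalIntegrable
    exact continuous_const.mul ((continuous_const.div (contS (k^2))) fun θ =>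
      (Real.sqrt_pos.mpr (hX θ)).ne')
  unfold ellE ellK nfun
  rw [← intervalIntegral.integral_const_mul, ← intervalIntegral.integral_sub h1 h2]
  apply intervalIntegral.integral_congr
  intro θ _
  simp only [mul_one_div]

lemma dfun_eq {k : ℝ} (hk0 : 0 < k) (hk1 : k ≤ 1) : ellE' k - k * ellK' k = dfun k := by
  have hY := Ypos hk0
  have h2 : Real.sqrt (1-k^2)^2 = 1 - k^2 := Real.sq_sqrt (by nlinarith)
  have h3 : IntervalIntegrable (fun θ : ℝ => Real.sqrt (1 - (1-k^2) * Real.sin θ^2))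
      MeasureTheory.volume 0 (π/2) := (contS (1-k^2)).intervalIntegrable _ _
  have h4 : IntervalIntegrable (fun θ : ℝ => k * (1 / Real.sqrt (1 - (1-k^2) * Real.sin θ^2)))
      MeasureTheory.volume 0 (π/2) := by
    apply Continuous.intervalIntegrable
    exact continuous_const.mul ((continuous_const.div (contS (1-k^2))) fun θ =>
      (Real.sqrt_pos.mpr (hY θ)).ne')
  unfold ellE' ellK' ellE ellK dfun
  rw [h2]
  rw [← intervalIntegral.integral_const_mul, ← intervalIntegral.integral_sub h3 h4]
  apply intervalIntegral.integral_congr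
  intro θ _
  simp only [mul_one_div]

lemma psi_eq {k : ℝ} (hk : k ∈ Set.Ioo (0:ℝ) 1) : psi k = 2 * nfun k / dfun k := by
  obtain ⟨h0, h1⟩ := hk
  unfold psi
  rw [nfun_eq (by nlinarith), dfun_eq h0 h1.le]

lemma psi_pos {k : ℝ} (hk : k ∈ Set.Ioo (0:ℝ) 1) : 0 < psi k := by
  rw [psi_eq hk]
  exact div_pos (by linarith [nfun_pos hk]) (dfun_pos hk)

lemma psi_mono : StrictMonoOn psi (Set.Ioo 0 1) := by
  intro a ha b hb hab
  rw [psi_eq ha, psi_eq hb]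
  have h1 : nfun a < nfun b :=
    nfun_mono (Set.mem_Ico.mpr ⟨ha.1.le, ha.2⟩) (Set.mem_Ico.mpr ⟨hb.1.le, hb.2⟩) hab
  have h2 : dfun b < dfun a :=
    dfun_anti (Set.mem_Ioc.mpr ⟨ha.1, ha.2.le⟩) (Set.mem_Ioc.mpr ⟨hb.1, hb.2.le⟩) hab
  have hna := nfun_pos ha
  have hdb := dfun_pos hb
  calc 2 * nfun a / dfun a < 2 * nfun b / dfun a :=
        (div_lt_div_iff_of_pos_right (by linarith)).mpr (by linarith)
    _ < 2 * nfun b / dfun b := by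
        apply div_lt_div_of_pos_left (by linarith) hdb h2

lemma psi_cont : ContinuousOn psi (Set.Ioo 0 1) := by
  have h1 : ContinuousOn (fun k => 2 * nfun k / dfun k) (Set.Ioo (0:ℝ) 1) := by
    apply ContinuousOn.div
    · exact continuousOn_const.mul fun k hk =>
        (hasDerivAt_nfun hk.1.le hk.2).continuousAt.continuousWithinAt
    · exact fun k hk => (hasDerivAt_dfun hk.1 hk.2.le).continuousAt.continuousWithinAt
    · exact fun k hk => (dfun_pos hk).ne'
  exact h1.congr fun k hk => psi_eq hk

lemma psi_image : psi '' Set.Ioo 0 1 = Set.Ioi 0 := by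
  apply Set.Subset.antisymm
  · rintro y ⟨k, hk, rfl⟩
    exact psi_pos hk
  · intro y hy
    rw [Set.mem_Ioi] at hy
    have hhalf : (1/2 : ℝ) ∈ Set.Ioo (0:ℝ) 1 := by norm_num
    have hd2 : 0 < dfun (1/2) := dfun_pos hhalf
    -- find a small `a` with `psi a < y`
    have htend : Filter.Tendsto (fun a => 2 * nfun a / dfun (1/2)) (nhds 0) (nhds 0) := by
      have hc : ContinuousAt (fun a => 2 * nfun a / dfun (1/2)) 0 := by
        apply ContinuousAt.div
        · exact continuousAt_const.mul (hasDerivAt_nfun le_rfl one_pos).continuousAt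
        · exact continuousAt_const
        · exact hd2.ne'
      have := hc.tendsto
      rwa [nfun_zero, mul_zero, zero_div] at this
    have hev : ∀ᶠ a in nhdsWithin 0 (Set.Ioi 0), 2 * nfun a / dfun (1/2) < y :=
      (htend.mono_left nhdsWithin_le_nhds).eventually_lt_const hy
    have hmem : ∀ᶠ a in nhdsWithin (0:ℝ) (Set.Ioi 0), a ∈ Set.Ioo (0:ℝ) (1/2) :=
      Ioo_mem_nhdsGT_of_mem ⟨le_rfl, by norm_num⟩
    obtain ⟨a, hay, ha⟩ := (hev.and hmem).exists
    have haI : a ∈ Set.Ioo (0:ℝ) 1 := ⟨ha.1, lt_trans ha.2 (by norm_num)⟩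
    have hda : dfun (1/2) ≤ dfun a :=
      (dfun_anti (Set.mem_Ioc.mpr ⟨ha.1, by linarith [ha.2]⟩)
        (Set.mem_Ioc.mpr ⟨by norm_num, by norm_num⟩) ha.2).le
    have hpa : psi a < y := by
      rw [psi_eq haI]
      calc 2 * nfun a / dfun a ≤ 2 * nfun a / dfun (1/2) := by
            apply div_le_div_of_nonneg_left (by linarith [nfun_pos haI]) hd2 hda
        _ < y := hay
    -- find a large `b` with `y < psi b`
    have hn2 : 0 < nfun (1/2) := nfun_pos hhalf
    have ht2 : Filter.Tendsto dfun (nhdsWithin 1 (Set.Iio 1)) (nhdsWithin 0 (Set.Ioi 0)) := by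
      apply tendsto_nhdsWithin_of_tendsto_nhds_of_eventually_within
      · have := (hasDerivAt_dfun one_pos le_rfl).continuousAt.tendsto
        rw [dfun_one] at this
        exact this.mono_left nhdsWithin_le_nhds
      · filter_upwards [Ioo_mem_nhdsLT_of_mem
          (show (1:ℝ) ∈ Set.Ioc (1/2 : ℝ) 1 from ⟨by norm_num, le_rfl⟩)] with b hb
        exact dfun_pos ⟨by linarith [hb.1], hb.2⟩
    have ht3 : Filter.Tendsto (fun b => 2 * nfun (1/2) * (dfun b)⁻¹)
        (nhdsWithin 1 (Set.Iio 1)) Filter.atTop :=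
      Filter.Tendsto.const_mul_atTop (by linarith) (tendsto_inv_nhdsGT_zero.comp ht2)
    have hev2 : ∀ᶠ b in nhdsWithin (1:ℝ) (Set.Iio 1), y < 2 * nfun (1/2) * (dfun b)⁻¹ :=
      ht3.eventually_gt_atTop y
    have hmem2 : ∀ᶠ b in nhdsWithin (1:ℝ) (Set.Iio 1), b ∈ Set.Ioo (1/2 : ℝ) 1 :=
      Ioo_mem_nhdsLT_of_mem ⟨by norm_num, le_rfl⟩
    obtain ⟨b, hby, hb⟩ := (hev2.and hmem2).exists
    have hbI : b ∈ Set.Ioo (0:ℝ) 1 := ⟨by linarith [hb.1], hb.2⟩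
    have hdbp := dfun_pos hbI
    have hnb : nfun (1/2) ≤ nfun b :=
      (nfun_mono (Set.mem_Ico.mpr ⟨by norm_num, by norm_num⟩)
        (Set.mem_Ico.mpr ⟨hbI.1.le, hbI.2⟩) hb.1).le
    have hpb : y < psi b := by
      rw [psi_eq hbI]
      calc y < 2 * nfun (1/2) * (dfun b)⁻¹ := hby
        _ ≤ 2 * nfun b * (dfun b)⁻¹ := by
            apply mul_le_mul_of_nonneg_right (by linarith) (inv_nonneg.mpr hdbp.le)
        _ = 2 * nfun b / dfun b := by rw [div_eq_mul_inv]
    -- intermediate value theorem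
    have hab : a ≤ b := by linarith [ha.2, hb.1]
    have hsub : Set.Icc a b ⊆ Set.Ioo (0:ℝ) 1 := fun x hx =>
      ⟨lt_of_lt_of_le haI.1 hx.1, lt_of_le_of_lt hx.2 hbI.2⟩
    obtain ⟨c, hc, hcy⟩ := intermediate_value_Icc hab (psi_cont.mono hsub) ⟨hpa.le, hpb.le⟩
    exact ⟨c, hsub hc, hcy⟩

end PsiAux

/-- ψ is a strictly increasing homeomorphism of (0,1) onto (0,∞); in particular its
inverse is well-defined and continuous. -/
theorem psi_strictMono_homeomorph :
    StrictMonoOn psi (Set.Ioo 0 1) ∧ ContinuousOn psi (Set.Ioo 0 1) ∧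
    psi '' Set.Ioo 0 1 = Set.Ioi 0 ∧
    ∃ φ : Set.Ioo (0:ℝ) 1 ≃ₜ Set.Ioi (0:ℝ),
      (∀ k : Set.Ioo (0:ℝ) 1, (φ k : ℝ) = psi k) ∧
      Continuous (fun y : Set.Ioi (0:ℝ) => (φ.symm y : ℝ)) := by
  refine ⟨PsiAux.psi_mono, PsiAux.psi_cont, PsiAux.psi_image, ?_⟩
  haveI : Set.OrdConnected (Set.Ioo (0:ℝ) 1) := Set.ordConnected_Ioo
  haveI : Set.OrdConnected (Set.Ioi (0:ℝ)) := Set.ordConnected_Ioi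
  set f : Set.Ioo (0:ℝ) 1 → Set.Ioi (0:ℝ) :=
    fun x => ⟨psi x, PsiAux.psi_pos x.2⟩ with hfdef
  have hmono : StrictMono f := fun a b hab =>
    Subtype.mk_lt_mk.mpr (PsiAux.psi_mono a.2 b.2 (Subtype.coe_lt_coe.mpr hab))
  have hsurj : Function.Surjective f := by
    rintro ⟨y, hy⟩
    have : y ∈ psi '' Set.Ioo 0 1 := PsiAux.psi_image ▸ hy
    obtain ⟨x, hx, hxy⟩ := this
    exact ⟨⟨x, hx⟩, Subtype.ext hxy⟩
  refine ⟨(StrictMono.orderIsoOfSurjective f hmono hsurj).toHomeomorph, fun k => rfl, ?_⟩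
  exact continuous_subtype_val.comp
    (StrictMono.orderIsoOfSurjective f hmono hsurj).toHomeomorph.symm.continuous
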